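/- arXiv:2008.11158 — 2 statements merged into one kernel-verified Lean document; each statement's English description precedes it below -/
import Mathlib

section
/- Let (B_1, α_1) and (B_2, α_2) be diagonalizable evolution algebras, β: B_1 → B_2 an algebra isomorphism, and φ: B_1 → K a linear form satisfying φ(xy) = α_2(β(x), β(y)) − α_1(x, y) for all x, y ∈ B_1. Then F: Ad(B_1, α_1) → Ad(B_2, α_2) defined by F(λ, x) = (λ + φ(x), β(x)) is an algebra isomorphism. -/
namespace EvolutionAlgebra

variable {K A B : Type*} [Field K] [AddCommGroup A] [Module K A] [AddCommGroup B] [Module K B]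

/-- The multiplication of `Ad(B, α) = K × B`: `(λ, x)(λ', x') = (α x x', x x')`. -/
def adMul (mulB : B →ₗ[K] B →ₗ[K] B) (α : B →ₗ[K] B →ₗ[K] K) :
    (K × B) →ₗ[K] (K × B) →ₗ[K] (K × B) :=
  LinearMap.mk₂ K (fun p q => (α p.2 q.2, mulB p.2 q.2))
    (fun p p' q => by simp)
    (fun c p q => by simp)
    (fun p q q' => by simp)
    (fun c p q => by simp)

/-- The map `F(λ, x) = (λ + φ x, β x)` between adjunction algebras. -/
def adjF {B₁ B₂ : Type*} [AddCommGroup B₁] [Module K B₁] [AddCommGroup B₂] [Module K B₂]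
    (φ : B₁ →ₗ[K] K) (β : B₁ ≃ₗ[K] B₂) : K × B₁ → K × B₂ :=
  fun p => (p.1 + φ p.2, β p.2)

theorem stmt9 {ι₁ ι₂ : Type*} [Fintype ι₁] [Fintype ι₂]
    {B₁ B₂ : Type*} [AddCommGroup B₁] [Module K B₁] [AddCommGroup B₂] [Module K B₂]
    (mul₁ : B₁ →ₗ[K] B₁ →ₗ[K] B₁) (hcomm₁ : ∀ x y : B₁, mul₁ x y = mul₁ y x)
    (mul₂ : B₂ →ₗ[K] B₂ →ₗ[K] B₂) (hcomm₂ : ∀ x y : B₂, mul₂ x y = mul₂ y x)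
    (α₁ : B₁ →ₗ[K] B₁ →ₗ[K] K) (hsym₁ : ∀ x y : B₁, α₁ x y = α₁ y x)
    (α₂ : B₂ →ₗ[K] B₂ →ₗ[K] K) (hsym₂ : ∀ x y : B₂, α₂ x y = α₂ y x)
    (b₁ : Module.Basis ι₁ K B₁) (hnat₁ : ∀ i j, i ≠ j → mul₁ (b₁ i) (b₁ j) = 0)
    (hdiag₁ : ∀ i j, i ≠ j → α₁ (b₁ i) (b₁ j) = 0)
    (b₂ : Module.Basis ι₂ K B₂) (hnat₂ : ∀ i j, i ≠ j → mul₂ (b₂ i) (b₂ j) = 0)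
    (hdiag₂ : ∀ i j, i ≠ j → α₂ (b₂ i) (b₂ j) = 0)
    (β : B₁ ≃ₗ[K] B₂) (hβ : ∀ x y : B₁, β (mul₁ x y) = mul₂ (β x) (β y))
    (φ : B₁ →ₗ[K] K) (hφ : ∀ x y : B₁, φ (mul₁ x y) = α₂ (β x) (β y) - α₁ x y) :
    IsLinearMap K (adjF φ β) ∧ Function.Bijective (adjF φ β) ∧
      ∀ p q : K × B₁,
        adjF φ β (adMul mul₁ α₁ p q) = adMul mul₂ α₂ (adjF φ β p) (adjF φ β q) := by
  refine ⟨⟨fun p q => ?_, fun c p => ?_⟩, ?_, fun p q => ?_⟩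
  · simp [adjF, add_add_add_comm]
  · simp [adjF, mul_add]
  · constructor
    · intro p q h
      simp only [adjF, Prod.mk.injEq] at h
      have h2 : p.2 = q.2 := β.injective h.2
      have h1 : p.1 = q.1 := by have := h.1; rw [h2] at this; exact add_right_cancel this
      exact Prod.ext h1 h2
    · intro q
      refine ⟨(q.1 - φ (β.symm q.2), β.symm q.2), ?_⟩
      simp [adjF]
  · simp [adjF, adMul, hφ, hβ]

end EvolutionAlgebra
end

section
/- Let B_1 and B_2 be perfect diagonalizable evolution algebras (B_i² = B_i). Then Ad(B_1, α_1) ≅ Ad(B_2, α_2) if and only if B_1 ≅ B_2 as algebras. -/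
namespace EvolutionAlgebra

variable {K A B : Type*} [Field K] [AddCommGroup A] [Module K A] [AddCommGroup B] [Module K B]

section Aux

variable {ι : Type*} [Fintype ι] {M : Type*} [AddCommGroup M] [Module K M]

lemma bilin_expand (f : B →ₗ[K] B →ₗ[K] M) (b : Module.Basis ι K B)
    (hd : ∀ i j, i ≠ j → f (b i) (b j) = 0) (x y : B) :
    f x y = ∑ i, (b.repr x i * b.repr y i) • f (b i) (b i) := by
  classical
  have h1 : f x y = ∑ i, ∑ j, (b.repr x i * b.repr y j) • f (b i) (b j) := by
    conv_lhs => rw [← b.sum_repr x, ← b.sum_repr y]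
    simp only [map_sum, LinearMap.sum_apply, map_smul, LinearMap.smul_apply,
      Finset.smul_sum, smul_smul]
    rw [Finset.sum_comm]
    exact Finset.sum_congr rfl fun i _ => Finset.sum_congr rfl fun j _ => by rw [mul_comm]
  rw [h1]
  refine Finset.sum_congr rfl fun i _ => ?_
  refine Finset.sum_eq_single i (fun j _ hji => ?_) (fun h => absurd (Finset.mem_univ i) h)
  rw [hd i j (Ne.symm hji), smul_zero]

lemma top_le_span_sq (mul : B →ₗ[K] B →ₗ[K] B) (b : Module.Basis ι K B)
    (hnat : ∀ i j, i ≠ j → mul (b i) (b j) = 0)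
    (hperf : Submodule.span K {z : B | ∃ x y : B, z = mul x y} = ⊤) :
    ⊤ ≤ Submodule.span K (Set.range fun i => mul (b i) (b i)) := by
  rw [← hperf]
  refine Submodule.span_le.2 ?_
  rintro z ⟨x, y, rfl⟩
  rw [bilin_expand mul b hnat x y]
  exact Submodule.sum_mem _ fun i _ =>
    Submodule.smul_mem _ _ (Submodule.subset_span ⟨i, rfl⟩)

/-- The squares `b i * b i` form a basis of a perfect evolution algebra. -/
noncomputable def sqBasis (mul : B →ₗ[K] B →ₗ[K] B) (b : Module.Basis ι K B)
    (hnat : ∀ i j, i ≠ j → mul (b i) (b j) = 0)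
    (hperf : Submodule.span K {z : B | ∃ x y : B, z = mul x y} = ⊤) : Module.Basis ι K B :=
  basisOfTopLeSpanOfCardEqFinrank (fun i => mul (b i) (b i))
    (top_le_span_sq mul b hnat hperf)
    (by haveI : Module.Finite K B := Module.Finite.of_basis b
        rw [Module.finrank_eq_card_basis b])

lemma sqBasis_apply (mul : B →ₗ[K] B →ₗ[K] B) (b : Module.Basis ι K B)
    (hnat : ∀ i j, i ≠ j → mul (b i) (b j) = 0)
    (hperf : Submodule.span K {z : B | ∃ x y : B, z = mul x y} = ⊤) (i : ι) :
    sqBasis mul b hnat hperf i = mul (b i) (b i) := by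
  simp [sqBasis]

/-- Zero annihilator. -/
lemma eq_zero_of_mul_basis_zero (mul : B →ₗ[K] B →ₗ[K] B) (b : Module.Basis ι K B)
    (hnat : ∀ i j, i ≠ j → mul (b i) (b j) = 0)
    (hperf : Submodule.span K {z : B | ∃ x y : B, z = mul x y} = ⊤)
    (x : B) (h : ∀ j, mul x (b j) = 0) : x = 0 := by
  classical
  have hz : ∀ j, b.repr x j = 0 := by
    intro j
    have h1 := bilin_expand mul b hnat x (b j)
    rw [h j] at h1
    have h2 : (0 : B) = (b.repr x j) • mul (b j) (b j) := by
      rw [h1]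
      refine (Finset.sum_eq_single j (fun i _ hij => ?_) (fun h => absurd (Finset.mem_univ j) h)).trans ?_
      · rw [show b.repr (b j) i = 0 by simp [Module.Basis.repr_self, Finsupp.single_apply, hij.symm],
          mul_zero, zero_smul]
      · simp [Module.Basis.repr_self]
    have hne : mul (b j) (b j) ≠ 0 := by
      have := (sqBasis mul b hnat hperf).ne_zero j
      rwa [sqBasis_apply] at this
    rcases smul_eq_zero.mp h2.symm with h | h
    · exact h
    · exact absurd h hne
  have : b.repr x = 0 := Finsupp.ext hz
  have := congrArg b.repr.symm this
  simpa using this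

lemma alpha_eq_zero_of_mul_eq_zero (mul : B →ₗ[K] B →ₗ[K] B) (α : B →ₗ[K] B →ₗ[K] K)
    (b : Module.Basis ι K B)
    (hnat : ∀ i j, i ≠ j → mul (b i) (b j) = 0)
    (hdiag : ∀ i j, i ≠ j → α (b i) (b j) = 0)
    (hperf : Submodule.span K {z : B | ∃ x y : B, z = mul x y} = ⊤)
    (x y : B) (h : mul x y = 0) : α x y = 0 := by
  classical
  set c := sqBasis mul b hnat hperf with hc
  have h1 : (0 : B) = ∑ i, (b.repr x i * b.repr y i) • c i := by
    rw [← h, bilin_expand mul b hnat x y]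
    refine Finset.sum_congr rfl fun i _ => ?_
    rw [sqBasis_apply]
  have hcoef : ∀ i, b.repr x i * b.repr y i = 0 :=
    Fintype.linearIndependent_iff.mp c.linearIndependent _ h1.symm
  rw [bilin_expand α b hdiag x y]
  refine Finset.sum_eq_zero fun i _ => ?_
  rw [hcoef i, zero_smul]

end Aux

theorem stmt11 {ι₁ ι₂ : Type*} [Fintype ι₁] [Fintype ι₂]
    {B₁ B₂ : Type*} [AddCommGroup B₁] [Module K B₁] [AddCommGroup B₂] [Module K B₂]
    (mul₁ : B₁ →ₗ[K] B₁ →ₗ[K] B₁) (hcomm₁ : ∀ x y : B₁, mul₁ x y = mul₁ y x)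
    (mul₂ : B₂ →ₗ[K] B₂ →ₗ[K] B₂) (hcomm₂ : ∀ x y : B₂, mul₂ x y = mul₂ y x)
    (α₁ : B₁ →ₗ[K] B₁ →ₗ[K] K) (hsym₁ : ∀ x y : B₁, α₁ x y = α₁ y x)
    (α₂ : B₂ →ₗ[K] B₂ →ₗ[K] K) (hsym₂ : ∀ x y : B₂, α₂ x y = α₂ y x)
    (b₁ : Module.Basis ι₁ K B₁) (hnat₁ : ∀ i j, i ≠ j → mul₁ (b₁ i) (b₁ j) = 0)
    (hdiag₁ : ∀ i j, i ≠ j → α₁ (b₁ i) (b₁ j) = 0)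
    (b₂ : Module.Basis ι₂ K B₂) (hnat₂ : ∀ i j, i ≠ j → mul₂ (b₂ i) (b₂ j) = 0)
    (hdiag₂ : ∀ i j, i ≠ j → α₂ (b₂ i) (b₂ j) = 0)
    (hperf₁ : Submodule.span K {z : B₁ | ∃ x y : B₁, z = mul₁ x y} = ⊤)
    (hperf₂ : Submodule.span K {z : B₂ | ∃ x y : B₂, z = mul₂ x y} = ⊤) :
    (∃ F : (K × B₁) ≃ₗ[K] (K × B₂),
        ∀ p q : K × B₁, F (adMul mul₁ α₁ p q) = adMul mul₂ α₂ (F p) (F q)) ↔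
      (∃ g : B₁ ≃ₗ[K] B₂, ∀ x y : B₁, g (mul₁ x y) = mul₂ (g x) (g y)) := by
  constructor
  · rintro ⟨F, hF⟩
    have hFs : ∀ p q : K × B₂, F.symm (adMul mul₂ α₂ p q)
        = adMul mul₁ α₁ (F.symm p) (F.symm q) := by
      intro p q
      apply F.injective
      rw [F.apply_symm_apply, hF, F.apply_symm_apply, F.apply_symm_apply]
    -- second component of F (μ, 0) vanishes
    have key : ∀ μ : K, (F (μ, 0)).2 = 0 := by
      intro μ
      refine eq_zero_of_mul_basis_zero mul₂ b₂ hnat₂ hperf₂ _ fun j => ?_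
      have h0 : adMul mul₂ α₂ (F (μ, 0)) ((0 : K), b₂ j) = 0 := by
        have h := hF (μ, 0) (F.symm (0, b₂ j))
        rw [F.apply_symm_apply] at h
        rw [← h]
        have hz : adMul mul₁ α₁ ((μ, 0) : K × B₁) (F.symm (0, b₂ j)) = 0 := by
          simp [adMul]
        rw [hz, map_zero]
      simpa [adMul] using congrArg Prod.snd h0
    have keys : ∀ μ : K, (F.symm (μ, 0)).2 = 0 := by
      intro μ
      refine eq_zero_of_mul_basis_zero mul₁ b₁ hnat₁ hperf₁ _ fun j => ?_
      have h0 : adMul mul₁ α₁ (F.symm (μ, 0)) ((0 : K), b₁ j) = 0 := by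
        have h := hFs (μ, 0) (F (0, b₁ j))
        rw [F.symm_apply_apply] at h
        rw [← h]
        have hz : adMul mul₂ α₂ ((μ, 0) : K × B₂) (F (0, b₁ j)) = 0 := by
          simp [adMul]
        rw [hz, map_zero]
      simpa [adMul] using congrArg Prod.snd h0
    let g₀ : B₁ →ₗ[K] B₂ :=
      (LinearMap.snd K K B₂) ∘ₗ F.toLinearMap ∘ₗ (LinearMap.inr K K B₁)
    let g₁ : B₂ →ₗ[K] B₁ :=
      (LinearMap.snd K K B₁) ∘ₗ F.symm.toLinearMap ∘ₗ (LinearMap.inr K K B₂)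
    have hg₀ : ∀ x : B₁, g₀ x = (F (0, x)).2 := fun x => rfl
    have hg₁ : ∀ y : B₂, g₁ y = (F.symm (0, y)).2 := fun y => rfl
    have hleft : ∀ x : B₁, g₁ (g₀ x) = x := by
      intro x
      rw [hg₀, hg₁]
      have hsplit : ((0 : K), (F (0, x)).2) = F (0, x) - ((F (0, x)).1, 0) := by
        simp [Prod.ext_iff]
      rw [hsplit, map_sub, F.symm_apply_apply]
      have : (F.symm ((F (0, x)).1, 0)).2 = 0 := keys _
      simp [Prod.snd_sub, this]
    have hright : ∀ y : B₂, g₀ (g₁ y) = y := by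
      intro y
      rw [hg₀, hg₁]
      have hsplit : ((0 : K), (F.symm (0, y)).2) = F.symm (0, y) - ((F.symm (0, y)).1, 0) := by
        simp [Prod.ext_iff]
      rw [hsplit, map_sub, F.apply_symm_apply]
      have : (F ((F.symm (0, y)).1, 0)).2 = 0 := key _
      simp [Prod.snd_sub, this]
    refine ⟨LinearEquiv.ofLinear g₀ g₁ (LinearMap.ext hright) (LinearMap.ext hleft), ?_⟩
    intro x y
    show g₀ (mul₁ x y) = mul₂ (g₀ x) (g₀ y)
    rw [hg₀, hg₀, hg₀]
    have hsplit : ((0 : K), mul₁ x y) = (α₁ x y, mul₁ x y) - (α₁ x y, 0) := by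
      simp [Prod.ext_iff]
    rw [hsplit, map_sub]
    have h2 : F (α₁ x y, mul₁ x y) = adMul mul₂ α₂ (F (0, x)) (F (0, y)) := by
      rw [← hF]; rfl
    rw [h2]
    have h3 : (F ((α₁ x y : K), (0 : B₁))).2 = 0 := key _
    simp [adMul, Prod.snd_sub, h3]
  · rintro ⟨g, hg⟩
    classical
    set c₁ := sqBasis mul₁ b₁ hnat₁ hperf₁ with hc₁
    set φ : B₁ →ₗ[K] K :=
      c₁.constr K (fun i => α₂ (g (b₁ i)) (g (b₁ i)) - α₁ (b₁ i) (b₁ i)) with hφdef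
    -- the pulled-back form β x y = α₂ (g x) (g y) is diagonal w.r.t. b₁
    have hβdiag : ∀ i j, i ≠ j → α₂ (g (b₁ i)) (g (b₁ j)) = 0 := by
      intro i j hij
      refine alpha_eq_zero_of_mul_eq_zero mul₂ α₂ b₂ hnat₂ hdiag₂ hperf₂ _ _ ?_
      rw [← hg, hnat₁ i j hij, map_zero]
    have hβexp : ∀ x y : B₁, α₂ (g x) (g y)
        = ∑ i, (b₁.repr x i * b₁.repr y i) • α₂ (g (b₁ i)) (g (b₁ i)) := by
      intro x y
      have := bilin_expand (α₂.compl₁₂ g.toLinearMap g.toLinearMap) b₁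
        (fun i j hij => by simpa [LinearMap.compl₁₂_apply] using hβdiag i j hij) x y
      simpa [LinearMap.compl₁₂_apply] using this
    have hφ : ∀ x y : B₁, φ (mul₁ x y) = α₂ (g x) (g y) - α₁ x y := by
      intro x y
      have h1 : mul₁ x y = ∑ i, (b₁.repr x i * b₁.repr y i) • c₁ i := by
        rw [bilin_expand mul₁ b₁ hnat₁ x y]
        exact Finset.sum_congr rfl fun i _ => by rw [hc₁, sqBasis_apply]
      rw [h1, map_sum]
      have h2 : ∀ i, φ ((b₁.repr x i * b₁.repr y i) • c₁ i)
          = (b₁.repr x i * b₁.repr y i) • (α₂ (g (b₁ i)) (g (b₁ i)) - α₁ (b₁ i) (b₁ i)) := by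
        intro i
        rw [map_smul, hφdef, Module.Basis.constr_basis]
      simp only [h2, smul_sub]
      rw [Finset.sum_sub_distrib, ← hβexp x y, ← bilin_expand α₁ b₁ hdiag₁ x y]
    refine ⟨{ toFun := fun p => (p.1 + φ p.2, g p.2),
              invFun := fun q => (q.1 - φ (g.symm q.2), g.symm q.2),
              map_add' := by
                intro p q
                simp [Prod.ext_iff]
                ring
              map_smul' := by
                intro c p
                simp [Prod.ext_iff, smul_add]
                ring
              left_inv := by
                intro p
                simp
              right_inv := by
                intro q
                simp }, ?_⟩
    intro p q
    simp only [adMul, LinearMap.mk₂_apply, LinearEquiv.coe_mk]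
    show ((α₁ p.2 q.2 + φ (mul₁ p.2 q.2) : K), g (mul₁ p.2 q.2))
      = ((α₂ (g p.2) (g q.2) : K), mul₂ (g p.2) (g q.2))
    rw [hφ, hg]
    simp

end EvolutionAlgebra
end
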